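/- arXiv:1310.2118 — 3 statements merged into one kernel-verified Lean document; each statement's English description precedes it below -/
import Mathlib

section
/- Let G be a flow graph with spanning tree T whose vertices are numbered 1..n in a bottom-up order (each v ≠ s is numbered less than its parent p(v)). Let v ≠ s have no entering cross arc or back arc with respect to T, let (u, v) be an arc into v with u maximum among sources of arcs into v, and suppose d(p(v)) ≥ u. Then if u = p(v), d(v) = u, and otherwise d(v) = d(p(v)). -/
universe u

variable {V : Type u}

attribute [local instance] Classical.propDecidable

/-- A flow graph: a directed graph with arc relation `A` and start vertex `s`. -/
structure FlowGraph (V : Type u) where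
  A : V → V → Prop
  s : V

namespace FlowGraph

/-- `p` is a (directed) path from `a` to `b`: a nonempty list of vertices starting at `a`,
ending at `b`, with consecutive vertices joined by arcs. -/
def IsPath (G : FlowGraph V) (p : List V) (a b : V) : Prop :=
  p ≠ [] ∧ p.head? = some a ∧ p.getLast? = some b ∧ p.Chain' G.A

def Reach (G : FlowGraph V) (a b : V) : Prop := ∃ p, G.IsPath p a b

/-- `u` dominates `v`: every path from the start vertex `s` to `v` contains `u`. -/
def Dom (G : FlowGraph V) (u v : V) : Prop :=
  ∀ p, G.IsPath p G.s v → u ∈ p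

/-- Acyclic: no cycle of more than one vertex, i.e. no two distinct mutually reachable
vertices. -/
def Acyclic (G : FlowGraph V) : Prop :=
  ∀ a b, a ≠ b → ¬ (G.Reach a b ∧ G.Reach b a)

/-- A spanning tree of `G` rooted at `s`, given by a parent function: every non-root
vertex has a tree arc from its parent, and the parent chain of every vertex reaches `s`. -/
structure SpanningTree (G : FlowGraph V) where
  parent : V → V
  parent_arc : ∀ v, v ≠ G.s → G.A (parent v) v
  parent_root : parent G.s = G.s
  root_reach : ∀ v, Relation.ReflTransGen (fun a b => parent a = b) v G.s

/-- `u` is an ancestor of `v` in the tree `T` (reflexively). -/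
def Anc {G : FlowGraph V} (T : SpanningTree G) (u v : V) : Prop :=
  Relation.ReflTransGen (fun a b => T.parent a = b) v u

/-- Replace occurrences of `v` by `x`. -/
noncomputable def repl (v x a : V) : V := if a = v then x else a

/-- Contraction of vertex `v` into vertex `x`: every arc end equal to `v` is replaced by `x`. -/
noncomputable def contract (G : FlowGraph V) (v x : V) : FlowGraph V where
  A a b := ∃ a' b', G.A a' b' ∧ a = repl v x a' ∧ b = repl v x b'
  s := G.s

/-- `x ∈ loop(u)`: `x` is a descendant of `u` in `T` with a path from `x` to `u` in `G`
containing only descendants of `u` in `T`. -/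
def InLoop (G : FlowGraph V) (T : SpanningTree G) (u x : V) : Prop :=
  Anc T u x ∧ ∃ p, G.IsPath p x u ∧ ∀ y ∈ p, Anc T u y

/-- `d` is an immediate-dominator function for `G`: for each `v ≠ s`, `d v ≠ v` is a
dominator of `v` and every dominator of `v` other than `v` itself dominates `d v`. -/
def IsIdom (G : FlowGraph V) (d : V → V) : Prop :=
  ∀ v, v ≠ G.s → d v ≠ v ∧ G.Dom (d v) v ∧
    ∀ u, G.Dom u v → u ≠ v → G.Dom u (d v)

end FlowGraph

open FlowGraph

set_option linter.unusedSectionVars false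

section AuxStmt3


variable {G : FlowGraph V} (T : G.SpanningTree)

lemma aux_mem_of_getLast? {l : List V} {a : V} (h : l.getLast? = some a) : a ∈ l := by
  induction l with
  | nil => simp at h
  | cons b t ih =>
    cases t with
    | nil => simp_all
    | cons c t' => rw [List.getLast?_cons_cons] at h; exact List.mem_cons_of_mem _ (ih h)

lemma aux_head?_append {l l2 : List V} (h : l ≠ []) : (l ++ l2).head? = l.head? := by
  cases l with | nil => simp at h | cons a t => simp

lemma aux_rtg_self {x : V} (h : Relation.ReflTransGen (fun a b => T.parent a = b) G.s x) :
    x = G.s := by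
  induction h with
  | refl => rfl
  | tail _ h ih => rw [← h, ih, T.parent_root]

variable [LinearOrder V]

lemma aux_anc_le (hbu : ∀ x, x ≠ G.s → x < T.parent x) {a b : V} (h : Anc T a b) : b ≤ a := by
  induction h with
  | refl => exact le_rfl
  | @tail m c hbm hmc ih =>
    by_cases hm : m = G.s
    · subst hm; rw [← hmc, T.parent_root]; exact ih
    · exact ih.trans (hmc ▸ (hbu m hm).le)

lemma aux_anc_total {a b : V} : ∀ {w}, Anc T a w → Anc T b w → Anc T a b ∨ Anc T b a := by
  intro w ha
  induction ha using Relation.ReflTransGen.head_induction_on with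
  | refl => exact fun hb => Or.inr hb
  | @head w c step rest ih =>
    intro hb
    rcases Relation.ReflTransGen.cases_head hb with h | ⟨c', hc', hb'⟩
    · exact Or.inl (h ▸ Relation.ReflTransGen.head step rest)
    · have : c' = c := by rw [← hc', step]
      exact ih (this ▸ hb')

lemma aux_anc_parent {a b : V} (h : Anc T a b) (hne : a ≠ b) : Anc T a (T.parent b) := by
  rcases Relation.ReflTransGen.cases_head h with h' | ⟨c, hc, h'⟩
  · exact absurd h'.symm hne
  · exact hc ▸ h'

lemma aux_isPath_snoc {q : List V} {a x w : V} (hq : G.IsPath q a x) (harc : G.A x w) :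
    G.IsPath (q ++ [w]) a w := by
  obtain ⟨hne, hh, hl, hc⟩ := hq
  refine ⟨by simp, ?_, by simp [List.getLast?_concat], ?_⟩
  · rw [aux_head?_append hne]; exact hh
  · change List.IsChain G.A _; rw [List.isChain_append]
    exact ⟨hc, List.isChain_singleton w, by intro p hp o ho; simp at ho; rw [hl] at hp; simp at hp; rw [← hp, ← ho]; exact harc⟩

lemma aux_tree_path (w : V) : ∃ p, G.IsPath p G.s w ∧ ∀ y ∈ p, Anc T y w := by
  have h := T.root_reach w
  induction h using Relation.ReflTransGen.head_induction_on with
  | refl => exact ⟨[G.s], ⟨by simp, rfl, rfl, List.isChain_singleton _⟩, by intro y hy; simp at hy; subst hy; exact Relation.ReflTransGen.refl⟩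
  | @head w c step rest ih =>
    by_cases hw : w = G.s
    · subst hw; exact ⟨[G.s], ⟨by simp, rfl, rfl, List.isChain_singleton _⟩, by intro y hy; simp at hy; subst hy; exact Relation.ReflTransGen.refl⟩
    · obtain ⟨p, hp, hanc⟩ := ih
      refine ⟨p ++ [w], aux_isPath_snoc (step ▸ hp) (step ▸ T.parent_arc w hw), ?_⟩
      intro y hy
      rcases List.mem_append.1 hy with hy | hy
      · exact Relation.ReflTransGen.head step (hanc y hy)
      · simp at hy; subst hy; exact Relation.ReflTransGen.refl

lemma aux_trunc {c : V} : ∀ (p : List V) (a t : V), G.IsPath p a t → c ∈ p →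
    ∃ q r, p = q ++ c :: r ∧ G.IsPath (q ++ [c]) a c ∧ c ∉ q := by
  intro p
  induction p with
  | nil => intro a t hp hc; simp at hc
  | cons hd tl ih =>
    intro a t hp hc
    have hha : hd = a := by have := hp.2.1; simp at this; exact this
    by_cases hch : c = hd
    · subst hch
      exact ⟨[], tl, by simp, ⟨by simp, by simp [hha], rfl, List.isChain_singleton _⟩, by simp⟩
    · have hctl : c ∈ tl := by rcases List.mem_cons.1 hc with h | h; exact absurd h hch; exact h
      have htlne : tl ≠ [] := by rintro rfl; simp at hctl
      obtain ⟨hd', tl', rfl⟩ := List.exists_cons_of_ne_nil htlne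
      have hchain := hp.2.2.2
      change List.IsChain G.A _ at hchain; rw [List.isChain_cons_cons] at hchain
      have hptl : G.IsPath (hd' :: tl') hd' t := by
        refine ⟨by simp, rfl, ?_, hchain.2⟩
        · have := hp.2.2.1; rw [List.getLast?_cons_cons] at this; exact this
      obtain ⟨q', r', heq, hpath', hnot'⟩ := ih hd' t hptl hctl
      refine ⟨hd :: q', r', by rw [heq]; rfl, ?_, ?_⟩
      · refine ⟨by simp, by simp [hha], List.getLast?_concat (l := hd :: q'), ?_⟩
        change List.IsChain G.A _; rw [List.cons_append, List.isChain_cons]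
        refine ⟨?_, hpath'.2.2.2⟩
        intro y hy
        rw [hpath'.2.1] at hy
        simp at hy; subst hy; exact hchain.1
      · simp [hch, hnot']

lemma aux_split_last {q : List V} {a c : V} (h : G.IsPath (q ++ [c]) a c) (hq : q ≠ []) :
    ∃ x, G.IsPath q a x ∧ G.A x c := by
  obtain ⟨hne, hh, hl, hc⟩ := h
  change List.IsChain G.A _ at hc; rw [List.isChain_append] at hc
  obtain ⟨x, hx⟩ : ∃ x, q.getLast? = some x := by
    cases hq' : q.getLast? with
    | none => rw [List.getLast?_eq_none_iff] at hq'; exact absurd hq' hq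
    | some x => exact ⟨x, rfl⟩
  refine ⟨x, ⟨hq, ?_, hx, hc.1⟩, hc.2.2 x hx c rfl⟩
  rw [aux_head?_append hq] at hh; exact hh

lemma aux_first_hit {p : List V} {v : V} (hp : G.IsPath p G.s v) (hv : v ≠ G.s) :
    ∃ q x, G.IsPath q G.s x ∧ G.A x v ∧ v ∉ q ∧ (∀ y ∈ q, y ∈ p) := by
  have hvmem : v ∈ p := aux_mem_of_getLast? hp.2.2.1
  obtain ⟨q, r, heq, hq, hnv⟩ := aux_trunc p G.s v hp hvmem
  have hqne : q ≠ [] := by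
    rintro rfl
    have := hq.2.1; simp at this; exact hv this
  obtain ⟨x, hqx, harc⟩ := aux_split_last hq hqne
  exact ⟨q, x, hqx, harc, hnv, fun y hy => heq ▸ List.mem_append_left _ hy⟩

lemma aux_dom_anc {a w : V} (h : G.Dom a w) : Anc T a w := by
  obtain ⟨p, hp, hanc⟩ := aux_tree_path T w
  exact hanc a (h p hp)

lemma aux_extend_down (hbu : ∀ x, x ≠ G.s → x < T.parent x) {x : V} :
    ∀ {w}, Anc T x w → ∀ q, G.IsPath q G.s x →
    ∃ q', G.IsPath q' G.s w ∧ ∀ y ∈ q', y ∈ q ∨ (Anc T x y ∧ y ≠ x) := by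
  intro w hxw
  induction hxw using Relation.ReflTransGen.head_induction_on with
  | refl => exact fun q hq => ⟨q, hq, fun y hy => Or.inl hy⟩
  | @head w c step rest ih =>
    intro q hq
    by_cases hw : w = G.s
    · subst hw
      have hc : c = G.s := by rw [← step, T.parent_root]
      have hx : x = G.s := aux_rtg_self T (hc ▸ rest)
      exact ⟨q, hx ▸ hq, fun y hy => Or.inl hy⟩
    · obtain ⟨q1, hq1, hprop⟩ := ih q hq
      refine ⟨q1 ++ [w], aux_isPath_snoc hq1 (step ▸ T.parent_arc w hw), ?_⟩
      intro y hy
      rcases List.mem_append.1 hy with hy | hy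
      · exact hprop y hy
      · simp at hy; subst hy
        refine Or.inr ⟨Relation.ReflTransGen.head step rest, ?_⟩
        have h1 := hbu _ hw
        rw [step] at h1
        exact ne_of_lt (lt_of_lt_of_le h1 (aux_anc_le T hbu rest))

lemma aux_dom_between (hbu : ∀ x, x ≠ G.s → x < T.parent x) {a w x : V}
    (hdom : G.Dom a w) (hax : Anc T a x) (hxw : Anc T x w) : G.Dom a x := by
  intro q hq
  obtain ⟨q', hq', hprop⟩ := aux_extend_down T hbu hxw q hq
  rcases hprop a (hdom q' hq') with h | ⟨h1, h2⟩
  · exact h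
  · exact absurd (le_antisymm (aux_anc_le T hbu h1) (aux_anc_le T hbu hax)) h2

lemma aux_dom_antisymm {a b : V} (hab : G.Dom a b) (hba : G.Dom b a)
    (hr : G.Reach G.s a) : a = b := by
  by_contra hne
  obtain ⟨p, hp⟩ := hr
  have key : ∀ n, ∀ p : List V, G.IsPath p G.s a → p.length ≤ n → False := by
    intro n
    induction n with
    | zero =>
      intro p hp hl
      have := hp.1
      cases p with | nil => exact this rfl | cons h t => simp at hl
    | succ n ih =>
      intro p hp hl
      obtain ⟨q, r, heq, hq, _⟩ := aux_trunc p G.s a hp (hba p hp)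
      have hamem : a ∈ q ++ [b] := hab _ hq
      obtain ⟨q2, r2, heq2, hq2, _⟩ := aux_trunc (q ++ [b]) G.s b hq hamem
      have hr2ne : r2 ≠ [] := by
        rintro rfl
        have h1 : (q ++ [b]).getLast? = some b := List.getLast?_concat (l := q)
        rw [heq2] at h1
        simp [List.getLast?_concat] at h1
        exact hne h1
      apply ih (q2 ++ [a]) hq2
      have hlen1 := congrArg List.length heq
      have hlen2 := congrArg List.length heq2
      have hr2 : 0 < r2.length := List.length_pos_iff.2 hr2ne
      simp at hlen1 hlen2 ⊢
      omega
  exact key p.length p hp le_rfl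

end AuxStmt3

/-- If `v ≠ s` has no entering cross or back arc, `(u, v)` is an arc into `v` with `u`
maximum, and `d (p v) ≥ u`, then `d v = u` if `u = p v` and `d v = d (p v)` otherwise.
(Vertices carry a bottom-up numbering: `x < p x` for `x ≠ s`.) -/
theorem stmt3 [LinearOrder V] (G : FlowGraph V) (T : SpanningTree G)
    (hreach : ∀ v, G.Reach G.s v)
    (hbu : ∀ x, x ≠ G.s → x < T.parent x)
    (d : V → V) (hd : G.IsIdom d)
    (v : V) (hv : v ≠ G.s)
    (hnocb : ∀ x, G.A x v → Anc T x v)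
    (u : V) (hu : G.A u v) (humax : ∀ x, G.A x v → x ≤ u)
    (hdp : u ≤ d (T.parent v)) :
    (u = T.parent v → d v = u) ∧ (u ≠ T.parent v → d v = d (T.parent v)) := by
  have hvlt : v < T.parent v := hbu v hv
  have hpv_arc : G.A (T.parent v) v := T.parent_arc v hv
  have hple : T.parent v ≤ u := humax _ hpv_arc
  have hfh : ∀ p, G.IsPath p G.s v → ∃ q x, G.IsPath q G.s x ∧ Anc T x (T.parent v) ∧
      x ≤ u ∧ x ∈ q ∧ (∀ y ∈ q, y ∈ p) := by
    intro p hp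
    obtain ⟨q, x, hq, harc, hnv, hsub⟩ := aux_first_hit hp hv
    have hxmem : x ∈ q := aux_mem_of_getLast? hq.2.2.1
    have hxne : x ≠ v := fun h => hnv (h ▸ hxmem)
    exact ⟨q, x, hq, aux_anc_parent T (hnocb x harc) hxne, humax x harc, hxmem, hsub⟩
  have hdv := hd v hv
  have hdomdvp : G.Dom (d v) (T.parent v) := by
    intro p hp
    have hmem := hdv.2.1 (p ++ [v]) (aux_isPath_snoc hp hpv_arc)
    rcases List.mem_append.1 hmem with h | h
    · exact h
    · simp at h; exact absurd h hdv.1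
  constructor
  · intro hupv
    have hdompv : G.Dom (T.parent v) v := by
      intro p hp
      obtain ⟨q, x, hq, hanc, hle, hxmem, hsub⟩ := hfh p hp
      have h1 : T.parent v ≤ x := aux_anc_le T hbu hanc
      have h2 : x = T.parent v := le_antisymm (hupv ▸ hle) h1
      exact hsub _ (h2 ▸ hxmem)
    have h1 : G.Dom (T.parent v) (d v) := hdv.2.2 _ hdompv hvlt.ne'
    rw [hupv]
    exact aux_dom_antisymm hdomdvp h1 (hreach (d v))
  · intro hne
    have hult : T.parent v < u := lt_of_le_of_ne hple (fun h => hne h.symm)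
    have hunev : u ≠ v := (lt_trans hvlt hult).ne'
    have hupv' : Anc T u (T.parent v) := aux_anc_parent T (hnocb u hu) hunev
    have hpvs : T.parent v ≠ G.s := by
      intro h
      exact hne (((aux_rtg_self T (h ▸ hupv')).trans h.symm))
    have hdpv := hd (T.parent v) hpvs
    have hdanc : Anc T (d (T.parent v)) (T.parent v) := aux_dom_anc T hdpv.2.1
    have hdomdpv : G.Dom (d (T.parent v)) v := by
      intro p hp
      obtain ⟨q, x, hq, hanc, hle, hxmem, hsub⟩ := hfh p hp
      have hxle : x ≤ d (T.parent v) := le_trans hle hdp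
      have hcomp : Anc T (d (T.parent v)) x := by
        rcases aux_anc_total T hanc hdanc with h | h
        · have h2 : d (T.parent v) ≤ x := aux_anc_le T hbu h
          have h3 : x = d (T.parent v) := le_antisymm hxle h2
          exact h3 ▸ Relation.ReflTransGen.refl
        · exact h
      exact hsub _ (aux_dom_between T hbu hdpv.2.1 hcomp hanc q hq)
    have hdnev : d (T.parent v) ≠ v := (lt_trans hvlt (lt_of_lt_of_le hult hdp)).ne'
    have h1 : G.Dom (d (T.parent v)) (d v) := hdv.2.2 _ hdomdpv hdnev
    have hnodom : ¬ G.Dom (T.parent v) v := by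
      obtain ⟨q, hq, hanc⟩ := aux_tree_path T u
      intro hdom
      have hmem := hdom (q ++ [v]) (aux_isPath_snoc hq hu)
      rcases List.mem_append.1 hmem with h | h
      · exact absurd (aux_anc_le T hbu (hanc _ h)) (not_le.2 hult)
      · simp at h; exact hvlt.ne' h
    have hdvnepv : d v ≠ T.parent v := fun h => hnodom (h ▸ hdv.2.1)
    have h2 : G.Dom (d v) (d (T.parent v)) := hdpv.2.2 _ hdomdvp hdvnepv
    exact aux_dom_antisymm h2 h1 (hreach _)
end

section
/- Let G be a flow graph with spanning tree T. For any vertex u, if two vertices x, y both lie in loop(u), then x and y lie in the same strongly connected component of the subgraph of G induced by the descendants of u in T; consequently loop(u) induces a strongly connected subgraph of G, and it is the unique maximal set of descendants of u containing u that does so. -/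
universe u

variable {V : Type u}

attribute [local instance] Classical.propDecidable

open FlowGraph

section Aux

variable {G : FlowGraph V}

lemma isPath_concat {p q : List V} {a b c : V} (hp : G.IsPath p a b) (hq : G.IsPath q b c) :
    ∃ r, G.IsPath r a c ∧ ∀ z ∈ r, z ∈ p ∨ z ∈ q := by
  obtain ⟨hp0, hpa, hpb, hpc⟩ := hp
  obtain ⟨hq0, hqa, hqb, hqc⟩ := hq
  obtain ⟨t, rfl⟩ : ∃ t, q = b :: t := by
    cases q with
    | nil => exact absurd rfl hq0
    | cons h t =>
      obtain rfl : h = b := by simpa using hqa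
      exact ⟨t, rfl⟩
  refine ⟨p ++ t, ⟨?_, ?_, ?_, ?_⟩, ?_⟩
  · intro h
    exact hp0 (List.append_eq_nil_iff.mp h).1
  · cases p with
    | nil => exact absurd rfl hp0
    | cons h t' => simpa using hpa
  · cases t with
    | nil =>
      have : b = c := by simpa using hqb
      simpa [this] using hpb
    | cons h t' =>
      have h1 : (h :: t').getLast? = some c := by
        rwa [List.getLast?_cons_cons] at hqb
      rw [List.getLast?_append, h1]
      rfl
  · show List.IsChain _ _; rw [List.isChain_append]
    refine ⟨hpc, (List.isChain_cons.mp hqc).2, ?_⟩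
    intro x hx y hy
    rw [hpb] at hx
    obtain rfl : b = x := by simpa using hx
    exact (List.isChain_cons.mp hqc).1 y hy
  · intro z hz
    rcases List.mem_append.mp hz with h | h
    · exact Or.inl h
    · exact Or.inr (List.mem_cons_of_mem _ h)

lemma isPath_suffix {p : List V} {a b z : V} (hp : G.IsPath p a b) (hz : z ∈ p) :
    ∃ q, G.IsPath q z b ∧ ∀ w ∈ q, w ∈ p := by
  induction p generalizing a with
  | nil => cases hz
  | cons h t ih =>
    rcases List.mem_cons.mp hz with rfl | hz
    · exact ⟨z :: t, ⟨by simp, by simp, hp.2.2.1, hp.2.2.2⟩, fun w hw => hw⟩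
    · have ht : t ≠ [] := by rintro rfl; cases hz
      obtain ⟨h', t', rfl⟩ : ∃ h' t', t = h' :: t' := by
        cases t with
        | nil => exact absurd rfl ht
        | cons h' t' => exact ⟨h', t', rfl⟩
      have htp : G.IsPath (h' :: t') h' b := by
        refine ⟨by simp, by simp, ?_, hp.2.2.2.tail⟩
        have := hp.2.2.1
        rwa [List.getLast?_cons_cons] at this
      obtain ⟨q, hq, hqm⟩ := ih htp hz
      exact ⟨q, hq, fun w hw => List.mem_cons_of_mem _ (hqm w hw)⟩

lemma tree_path (T : SpanningTree G) {u y : V} (h : Anc T u y) :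
    ∃ p, G.IsPath p u y ∧ ∀ z ∈ p, Anc T u z ∧ Anc T z y := by
  induction h with
  | refl =>
    exact ⟨[y], ⟨by simp, by simp, by simp, List.isChain_singleton _⟩,
      fun z hz => by simp at hz; subst hz; exact ⟨Relation.ReflTransGen.refl,
        Relation.ReflTransGen.refl⟩⟩
  | tail h1 hstep ih =>
    rename_i b c
    obtain ⟨p, hp, hpm⟩ := ih
    by_cases hb : b = G.s
    · have hcb : c = b := by rw [← hstep, hb, T.parent_root]
      subst hcb
      exact ⟨p, hp, fun z hz => ⟨(hpm z hz).1.tail hstep, (hpm z hz).2⟩⟩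
    · obtain ⟨ph, pt, rfl⟩ : ∃ ph pt, p = ph :: pt := by
        cases p with
        | nil => exact absurd rfl hp.1
        | cons ph pt => exact ⟨ph, pt, rfl⟩
      refine ⟨c :: ph :: pt, ⟨by simp, by simp, ?_, ?_⟩, ?_⟩
      · rw [List.getLast?_cons_cons]
        exact hp.2.2.1
      · show List.IsChain _ _; rw [List.isChain_cons]
        refine ⟨?_, hp.2.2.2⟩
        intro w hw
        rw [hp.2.1] at hw
        simp at hw
        subst hw
        rw [← hstep]
        exact T.parent_arc b hb
      · intro z hz
        rcases List.mem_cons.mp hz with rfl | hz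
        · exact ⟨Relation.ReflTransGen.refl, h1.tail hstep⟩
        · exact ⟨(hpm z hz).1.tail hstep, (hpm z hz).2⟩

end Aux

/-- Any two vertices of `loop(u)` are joined by paths through descendants of `u` (indeed
through `loop(u)` itself), so `loop(u)` induces a strongly connected subgraph, and it is
the unique maximal such set of descendants of `u` containing `u`. -/
theorem stmt6 (G : FlowGraph V) (T : SpanningTree G)
    (hreach : ∀ v, G.Reach G.s v) (u : V) :
    (∀ x y, InLoop G T u x → InLoop G T u y →
        ∃ p, G.IsPath p x y ∧ ∀ z ∈ p, Anc T u z) ∧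
    (∀ x y, InLoop G T u x → InLoop G T u y →
        ∃ p, G.IsPath p x y ∧ ∀ z ∈ p, InLoop G T u z) ∧
    (∀ S : Set V, u ∈ S → (∀ x ∈ S, Anc T u x) →
        (∀ x ∈ S, ∀ y ∈ S, ∃ p, G.IsPath p x y ∧ ∀ z ∈ p, z ∈ S) →
        ∀ x ∈ S, InLoop G T u x) := by
  have anc_trans : ∀ {a b c : V}, Anc T a b → Anc T b c → Anc T a c :=
    fun h1 h2 => Relation.ReflTransGen.trans h2 h1
  -- a vertex in loop(u) can reach u within loop(u)
  have key : ∀ x y, InLoop G T u x → InLoop G T u y →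
      ∃ p, G.IsPath p x y ∧ ∀ z ∈ p, InLoop G T u z := by
    intro x y hx hy
    obtain ⟨hax, p, hp, hpd⟩ := hx
    obtain ⟨hay, py, hpy, hpyd⟩ := hy
    obtain ⟨q, hq, hqd⟩ := tree_path T hay
    obtain ⟨r, hr, hrm⟩ := isPath_concat hp hq
    refine ⟨r, hr, ?_⟩
    intro z hz
    rcases hrm z hz with hzp | hzq
    · -- z lies on the path from x to u through descendants
      obtain ⟨q', hq', hq'm⟩ := isPath_suffix hp hzp
      exact ⟨hpd z hzp, q', hq', fun w hw => hpd w (hq'm w hw)⟩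
    · -- z lies on the tree path from u to y
      obtain ⟨hauz, hzay⟩ := hqd z hzq
      obtain ⟨q', hq', hq'm⟩ := tree_path T hzay
      obtain ⟨r', hr', hr'm⟩ := isPath_concat hq' hpy
      refine ⟨hauz, r', hr', ?_⟩
      intro w hw
      rcases hr'm w hw with hw1 | hw2
      · exact anc_trans hauz (hq'm w hw1).1
      · exact hpyd w hw2
  refine ⟨?_, key, ?_⟩
  · intro x y hx hy
    obtain ⟨p, hp, hpd⟩ := key x y hx hy
    exact ⟨p, hp, fun z hz => (hpd z hz).1⟩
  · intro S hu hdesc hconn x hx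
    obtain ⟨p, hp, hpm⟩ := hconn x hx u hu
    exact ⟨hdesc x hx, p, hp, fun y hy => hdesc y (hpm y hy)⟩
end

section
/- Let T be a spanning tree of flow graph G with bottom-up numbering, and let u ≠ v be vertices with v ∈ loop(u) and d(v) > u. Then d(v) = d(u); that is, u and v have exactly the same proper dominators. -/
universe u

variable {V : Type u}

attribute [local instance] Classical.propDecidable

open FlowGraph

section Aux

variable {G : FlowGraph V} {T : SpanningTree G}

theorem anc_le [LinearOrder V] (hbu : ∀ x, x ≠ G.s → x < T.parent x)
    {a b : V} (h : Anc T a b) : b ≤ a := by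
  induction h with
  | refl => exact le_refl _
  | @tail m a' _ h2 ih =>
    rcases eq_or_ne m G.s with hm | hm
    · subst hm
      rw [T.parent_root] at h2
      exact h2 ▸ ih
    · exact ih.trans (le_of_lt (h2 ▸ hbu m hm))

theorem anc_s {a : V} (h : Anc T a G.s) : a = G.s := by
  induction h with
  | refl => rfl
  | @tail m a' _ h2 ih =>
    subst ih
    rw [T.parent_root] at h2
    exact h2.symm

theorem anc_total {a b c : V} (h1 : Anc T a c) (h2 : Anc T b c) :
    Anc T a b ∨ Anc T b a := by
  induction h1 with
  | refl => exact Or.inr h2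
  | @tail m a' _ hstep ih =>
    rcases ih with hbm | hmb
    · exact Or.inl (Relation.ReflTransGen.tail hbm hstep)
    · rcases Relation.ReflTransGen.cases_head hmb with heq | ⟨m', hm', hrest⟩
      · subst heq
        exact Or.inl (Relation.ReflTransGen.single hstep)
      · have hma : a' = m' := hstep.symm.trans hm'
        subst hma
        exact Or.inr hrest

theorem isPath_single (G : FlowGraph V) (a : V) : G.IsPath [a] a a :=
  ⟨by simp, rfl, rfl, List.isChain_singleton a⟩

theorem isPath_append {p q : List V} {a b c : V}
    (hp : G.IsPath p a b) (hq : G.IsPath q b c) : G.IsPath (p ++ q.tail) a c := by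
  obtain ⟨hp0, hph, hpl, hpc⟩ := hp
  obtain ⟨hq0, hqh, hql, hqc⟩ := hq
  rcases q with _ | ⟨qh, qt⟩
  · exact absurd rfl hq0
  have hqb : qh = b := by simpa using hqh
  subst hqb
  rcases p with _ | ⟨ph, pt⟩
  · exact absurd rfl hp0
  have hpa : ph = a := by simpa using hph
  subst hpa
  refine ⟨by simp, by simp, ?_, ?_⟩
  · rcases qt with _ | ⟨qt1, qts⟩
    · have hbc : qh = c := by simpa using hql
      rw [List.tail_cons, List.append_nil, hpl]
      exact congrArg some hbc
    · rw [List.tail_cons, List.getLast?_append]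
      rw [List.getLast?_cons_cons] at hql
      rw [hql]
      rfl
  · refine List.IsChain.append hpc hqc.tail ?_
    intro x hx y hy
    rw [hpl] at hx
    have hxb : qh = x := by simpa using hx
    subst hxb
    exact (List.isChain_cons.mp hqc).1 y hy

theorem tree_path_down {u v : V} (h : Anc T u v) :
    ∃ p, G.IsPath p u v ∧ ∀ y ∈ p, Anc T u y ∧ Anc T y v := by
  induction h using Relation.ReflTransGen.head_induction_on with
  | refl =>
    refine ⟨[u], isPath_single G u, ?_⟩
    intro y hy
    have : y = u := by simpa using hy
    subst this
    exact ⟨Relation.ReflTransGen.refl, Relation.ReflTransGen.refl⟩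
  | @head w c hstep htail ih =>
    rcases eq_or_ne w G.s with hws | hws
    · subst hws
      rw [T.parent_root] at hstep
      subst hstep
      have hu : u = G.s := anc_s htail
      subst hu
      refine ⟨[G.s], isPath_single G G.s, ?_⟩
      intro y hy
      have : y = G.s := by simpa using hy
      subst this
      exact ⟨Relation.ReflTransGen.refl, Relation.ReflTransGen.refl⟩
    · obtain ⟨p, hp, hmem⟩ := ih
      have harc : G.A c w := hstep ▸ T.parent_arc w hws
      have hcw : G.IsPath [c, w] c w := ⟨by simp, rfl, rfl, List.isChain_pair.mpr harc⟩
      refine ⟨p ++ [w], isPath_append hp hcw, ?_⟩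
      intro y hy
      have hanc_cw : Anc T c w := Relation.ReflTransGen.single hstep
      have hanc_uw : Anc T u w := Relation.ReflTransGen.head hstep htail
      rcases List.mem_append.mp hy with hyp | hyw
      · obtain ⟨h1, h2⟩ := hmem y hyp
        exact ⟨h1, Relation.ReflTransGen.trans hanc_cw h2⟩
      · have : y = w := by simpa using hyw
        subst this
        exact ⟨hanc_uw, Relation.ReflTransGen.refl⟩

theorem dom_anc {x w : V} (h : G.Dom x w) : Anc T x w := by
  obtain ⟨p, hp, hmem⟩ := tree_path_down (T.root_reach w : Anc T G.s w)
  exact (hmem x (h p hp)).2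

end Aux

/-- If `u ≠ v`, `v ∈ loop(u)`, and `d v > u` (bottom-up numbering), then `d v = d u`:
`u` and `v` have exactly the same proper dominators. -/
theorem stmt10 [LinearOrder V] (G : FlowGraph V) (T : SpanningTree G)
    (hreach : ∀ v, G.Reach G.s v)
    (hbu : ∀ x, x ≠ G.s → x < T.parent x)
    (d : V → V) (hd : G.IsIdom d)
    (u v : V) (huv : u ≠ v) (hloop : InLoop G T u v)
    (hdv : u < d v) :
    d v = d u ∧ ∀ x, (G.Dom x v ∧ x ≠ v) ↔ (G.Dom x u ∧ x ≠ u) := by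
  obtain ⟨hanc_uv, q, hq, hqmem⟩ := hloop
  have hvu : v ≤ u := anc_le hbu hanc_uv
  have hsmax : ∀ x : V, x ≤ G.s := fun x => anc_le hbu (T.root_reach x : Anc T G.s x)
  have hus : u ≠ G.s := by
    intro h
    subst h
    exact absurd (hsmax (d v)) (not_le.mpr hdv)
  have hdvs : d v ≤ G.s := hsmax (d v)
  have hvs : v ≠ G.s := by
    intro h
    subst h
    exact absurd (hvu.trans_lt hdv) (not_lt.mpr hdvs)
  have claimA : ∀ x, G.Dom x u → x ≠ u → G.Dom x v ∧ x ≠ v := by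
    intro x hxdom hxu
    have hux : u < x := lt_of_le_of_ne (anc_le hbu (dom_anc hxdom)) (Ne.symm hxu)
    have hxv : x ≠ v := by
      intro h
      subst h
      exact absurd hux (not_lt.mpr hvu)
    refine ⟨?_, hxv⟩
    intro p hp
    by_contra hxp
    have hpath : G.IsPath (p ++ q.tail) G.s u := isPath_append hp hq
    rcases List.mem_append.mp (hxdom _ hpath) with h1 | h2
    · exact hxp h1
    · have : x ≤ u := anc_le hbu (hqmem x (List.mem_of_mem_tail h2))
      exact absurd this (not_le.mpr hux)
  have claimB : ∀ x, G.Dom x v → x ≠ v → G.Dom x u ∧ x ≠ u := by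
    intro x hxdom hxv
    obtain ⟨_, _, hdv3⟩ := hd v hvs
    have hxdv : G.Dom x (d v) := hdv3 x hxdom hxv
    have hdvx : d v ≤ x := anc_le hbu (dom_anc hxdv)
    have hux : u < x := lt_of_lt_of_le hdv hdvx
    have hxu : x ≠ u := by
      intro h
      subst h
      exact absurd hux (lt_irrefl _)
    refine ⟨?_, hxu⟩
    intro p hp
    by_contra hxp
    obtain ⟨r, hr, hrmem⟩ := tree_path_down hanc_uv
    have hpath : G.IsPath (p ++ r.tail) G.s v := isPath_append hp hr
    rcases List.mem_append.mp (hxdom _ hpath) with h1 | h2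
    · exact hxp h1
    · have : x ≤ u := anc_le hbu (hrmem x (List.mem_of_mem_tail h2)).1
      exact absurd this (not_le.mpr hux)
  constructor
  · obtain ⟨hdu1, hdu2, hdu3⟩ := hd u hus
    obtain ⟨hdv1, hdv2, hdv3⟩ := hd v hvs
    obtain ⟨hduv, hduv2⟩ := claimA (d u) hdu2 hdu1
    obtain ⟨hdvu, hdvu2⟩ := claimB (d v) hdv2 hdv1
    have h1 : G.Dom (d u) (d v) := hdv3 _ hduv hduv2
    have h2 : G.Dom (d v) (d u) := hdu3 _ hdvu hdvu2
    exact le_antisymm (anc_le hbu (dom_anc h1)) (anc_le hbu (dom_anc h2))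
  · intro x
    exact ⟨fun ⟨h1, h2⟩ => claimB x h1 h2, fun ⟨h1, h2⟩ => claimA x h1 h2⟩
end
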